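/- With G and G_d as above, additionally for every nonterminal A of G and every ref-word r consisting only of variable operations (clr(r) = ε): A ⇒*_G r if and only if A_ε ⇒*_{G_d} r. Consequently, the set of valid ref-words of G that clr-map to d equals the language generated by G_d from its start symbol S_{1,n}, intersected with the valid ref-words. -/

import Mathlib

/-- A variable operation: `(x, true)` is `⊢x` (open), `(x, false)` is `⊣x` (close). -/
abbrev VarOp (X : Type) : Type := X × Bool

/-- A ref-word: a word over the extended alphabet `Σ ∪ Γ_X`. -/
abbrev RefWord (T X : Type) : Type := List (T ⊕ VarOp X)

/-- The morphism `clr` erasing variable operations and fixing letters of `Σ`. -/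
def clr {T X : Type} (r : RefWord T X) : List T :=
  r.filterMap (fun a => match a with | Sum.inl t => some t | Sum.inr _ => none)

/-- A ref-word is valid for `X`: each `⊢x` and `⊣x` occurs exactly once, `⊢x` before `⊣x`. -/
def ValidRef {T X : Type} (r : RefWord T X) : Prop :=
  ∀ x : X, ∃ u v w : RefWord T X,
    r = u ++ Sum.inr (x, true) :: (v ++ Sum.inr (x, false) :: w) ∧
    ∀ b : Bool, Sum.inr (x, b) ∉ u ∧ Sum.inr (x, b) ∉ v ∧ Sum.inr (x, b) ∉ w

/-- `μ` is the `(X,d)`-mapping `μ^r` induced by the ref-word `r`. -/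
def MappingOf {T X : Type} (r : RefWord T X) (μ : X → ℕ × ℕ) : Prop :=
  ∀ x : X, ∃ u v w : RefWord T X,
    r = u ++ Sum.inr (x, true) :: (v ++ Sum.inr (x, false) :: w) ∧
    μ x = ((clr u).length + 1, (clr u).length + 1 + (clr v).length)

/-- The spanner defined by an extraction grammar (a CFG over `Σ ∪ Γ_X`). -/
def spanner {T X : Type} (G : ContextFreeGrammar (T ⊕ VarOp X)) (d : List T) :
    Set (X → ℕ × ℕ) :=
  {μ | ∃ r : RefWord T X, r ∈ G.language ∧ ValidRef r ∧ clr r = d ∧ MappingOf r μ}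

/-- A spanner is context-free if it is definable by an extraction grammar. -/
def IsCFSpanner {T X : Type} (S : List T → Set (X → ℕ × ℕ)) : Prop :=
  ∃ G : ContextFreeGrammar.{0} (T ⊕ VarOp X), ∀ d : List T, S d = spanner G d

/-- A grammar is in Chomsky Normal Form: every rule is `A → BC` or `A → a`. -/
def InCNF {U : Type} (G : ContextFreeGrammar U) : Prop :=
  ∀ r ∈ G.rules,
    (∃ B C : G.NT, r.output = [Symbol.nonterminal B, Symbol.nonterminal C]) ∨
    (∃ a : U, r.output = [Symbol.terminal a])

open Classical in
/-- The document-adjusted variants of a single CNF rule: `A_{i,i} → σ_i`, `A_ε → τ`,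
`A_ε → B_ε C_ε`, `A_{i,j} → B_{i,j} C_ε`, `A_{i,j} → B_ε C_{i,j}`, and
`A_{i,j} → B_{i,i'} C_{i'+1,j}`.  The nonterminal `A_{i,j}` is encoded as `(A, some (i,j))`
and `A_ε` as `(A, none)`. -/
noncomputable def adjustRule {T X : Type} (d : List T) (N : Type)
    (r : ContextFreeRule (T ⊕ VarOp X) N) :
    List (ContextFreeRule (T ⊕ VarOp X) (N × Option (ℕ × ℕ))) :=
  match r.output with
  | [Symbol.terminal (Sum.inl σ)] =>
      (List.range d.length).filterMap fun i0 =>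
        if d[i0]? = some σ then
          some ⟨(r.input, some (i0 + 1, i0 + 1)), [Symbol.terminal (Sum.inl σ)]⟩
        else none
  | [Symbol.terminal (Sum.inr τ)] =>
      [⟨(r.input, none), [Symbol.terminal (Sum.inr τ)]⟩]
  | [Symbol.nonterminal B, Symbol.nonterminal C] =>
      ⟨(r.input, none), [Symbol.nonterminal (B, none), Symbol.nonterminal (C, none)]⟩ ::
      (List.range d.length).flatMap fun i0 =>
        (List.range d.length).flatMap fun j0 =>
          if i0 ≤ j0 then
            ⟨(r.input, some (i0 + 1, j0 + 1)),
                [Symbol.nonterminal (B, some (i0 + 1, j0 + 1)), Symbol.nonterminal (C, none)]⟩ ::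
            ⟨(r.input, some (i0 + 1, j0 + 1)),
                [Symbol.nonterminal (B, none), Symbol.nonterminal (C, some (i0 + 1, j0 + 1))]⟩ ::
            ((List.range d.length).filterMap fun i' =>
              if i0 ≤ i' ∧ i' < j0 then
                some ⟨(r.input, some (i0 + 1, j0 + 1)),
                  [Symbol.nonterminal (B, some (i0 + 1, i' + 1)),
                   Symbol.nonterminal (C, some (i' + 2, j0 + 1))]⟩
              else none)
          else []
  | _ => []

open Classical in
/-- The grammar `G_d` obtained by adjusting the CNF extraction grammar `G` to the document `d`. -/
noncomputable def adjust {T X : Type} (G : ContextFreeGrammar.{0} (T ⊕ VarOp X)) (d : List T) :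
    ContextFreeGrammar.{0} (T ⊕ VarOp X) where
  NT := G.NT × Option (ℕ × ℕ)
  initial := (G.initial, some (1, d.length))
  rules := (G.rules.toList.flatMap (adjustRule d G.NT)).toFinset


open ContextFreeGrammar ContextFreeRule


universe uu vv
variable {U : Type uu} {N : Type vv}

lemma rewrite_split {r : ContextFreeRule U N} :
    ∀ {u v s' : List (Symbol U N)}, r.Rewrites (u ++ v) s' →
    (∃ u', r.Rewrites u u' ∧ s' = u' ++ v) ∨ (∃ v', r.Rewrites v v' ∧ s' = u ++ v') := by
  intro u
  induction u with
  | nil => intro v s' h; exact Or.inr ⟨s', h, rfl⟩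
  | cons x u ih =>
    intro v s' h
    cases h with
    | head s => exact Or.inl ⟨r.output ++ u, Rewrites.head u, by simp⟩
    | cons _ hrs =>
      rcases ih hrs with ⟨u', hu', rfl⟩ | ⟨v', hv', rfl⟩
      · exact Or.inl ⟨x :: u', Rewrites.cons x hu', rfl⟩
      · exact Or.inr ⟨v', hv', rfl⟩

lemma terminal_derives {g : ContextFreeGrammar U} {w : List U} {v : List (Symbol U g.NT)}
    (h : g.Derives (w.map Symbol.terminal) v) : v = w.map Symbol.terminal := by
  rcases h.eq_or_head with rfl | ⟨u, ⟨r, _, hrw⟩, _⟩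
  · rfl
  · exfalso
    rcases hrw.exists_parts with ⟨p, q, hpq, -⟩
    have : Symbol.nonterminal r.input ∈ w.map (Symbol.terminal (N := g.NT)) := by
      rw [hpq]; simp
    simp at this

lemma derives_split {g : ContextFreeGrammar U} {w : List U} :
    ∀ {s : List (Symbol U g.NT)}, g.Derives s (w.map Symbol.terminal) →
    ∀ u v, s = u ++ v →
    ∃ w1 w2, w = w1 ++ w2 ∧ g.Derives u (w1.map Symbol.terminal) ∧
      g.Derives v (w2.map Symbol.terminal) := by
  intro s h
  induction h using Relation.ReflTransGen.head_induction_on with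
  | refl =>
    intro u v huv
    rcases List.map_eq_append_iff.mp huv with ⟨w1, w2, rfl, rfl, rfl⟩
    exact ⟨w1, w2, rfl, Relation.ReflTransGen.refl, Relation.ReflTransGen.refl⟩
  | head hp _ ih =>
    rintro u v rfl
    rcases hp with ⟨r, hr, hrw⟩
    rcases rewrite_split hrw with ⟨u', hu', rfl⟩ | ⟨v', hv', rfl⟩
    · rcases ih u' v rfl with ⟨w1, w2, rfl, h1, h2⟩
      exact ⟨w1, w2, rfl, Relation.ReflTransGen.head ⟨r, hr, hu'⟩ h1, h2⟩
    · rcases ih u v' rfl with ⟨w1, w2, rfl, h1, h2⟩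
      exact ⟨w1, w2, rfl, h1, Relation.ReflTransGen.head ⟨r, hr, hv'⟩ h2⟩


lemma derives_ne_nil {U : Type} {g : ContextFreeGrammar U} (hg : InCNF g)
    {s v : List (Symbol U g.NT)} (h : g.Derives s v) (hs : s ≠ []) : v ≠ [] := by
  induction h with
  | refl => exact hs
  | tail _ hp ih =>
    rcases hp with ⟨r, hr, hrw⟩
    rcases hrw.exists_parts with ⟨p, q, -, rfl⟩
    rcases hg r hr with ⟨B, C, hout⟩ | ⟨a, hout⟩ <;> simp [hout]

lemma cnf_decomp {U : Type} {g : ContextFreeGrammar U} (hg : InCNF g) {A : g.NT} {w : List U}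
    (h : g.Derives [Symbol.nonterminal A] (w.map Symbol.terminal)) :
    ∃ r ∈ g.rules, r.input = A ∧
      ((∃ a, r.output = [Symbol.terminal a] ∧ w = [a]) ∨
       (∃ B C w1 w2, r.output = [Symbol.nonterminal B, Symbol.nonterminal C] ∧ w = w1 ++ w2 ∧
        w1 ≠ [] ∧ w2 ≠ [] ∧ g.Derives [Symbol.nonterminal B] (w1.map Symbol.terminal) ∧
        g.Derives [Symbol.nonterminal C] (w2.map Symbol.terminal))) := by
  rcases h.eq_or_head with heq | ⟨u, ⟨r, hr, hrw⟩, hder⟩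
  · exfalso
    have : Symbol.nonterminal A ∈ w.map (Symbol.terminal (N := g.NT)) := by
      rw [← heq]; simp
    simp at this
  · rcases hrw.exists_parts with ⟨p, q, hpq, rfl⟩
    have hp : p = [] ∧ r.input = A ∧ q = [] := by
      have := hpq
      rcases p with _ | ⟨x, p⟩
      · simp_all
      · rcases p <;> simp_all
    obtain ⟨rfl, hin, rfl⟩ := hp
    simp only [List.append_nil, List.nil_append] at hder
    refine ⟨r, hr, hin, ?_⟩
    rcases hg r hr with ⟨B, C, hout⟩ | ⟨a, hout⟩
    · rw [hout] at hder
      right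
      rcases derives_split hder [Symbol.nonterminal B] [Symbol.nonterminal C] rfl with
        ⟨w1, w2, rfl, h1, h2⟩
      refine ⟨B, C, w1, w2, hout, rfl, ?_, ?_, h1, h2⟩
      · intro hw; subst hw
        exact (derives_ne_nil hg h1 (by simp)) (by simp)
      · intro hw; subst hw
        exact (derives_ne_nil hg h2 (by simp)) (by simp)
    · left
      rw [hout] at hder
      have := terminal_derives (w := [a]) (by simpa using hder)
      refine ⟨a, hout, ?_⟩
      rcases w with _ | ⟨b, w⟩
      · simp at this
      · rcases w with _ | ⟨c, w⟩ <;> simp_all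

lemma derives_binary {U : Type} {g : ContextFreeGrammar U} {r : ContextFreeRule U g.NT}
    (hr : r ∈ g.rules) {B C : g.NT} (hout : r.output = [Symbol.nonterminal B, Symbol.nonterminal C])
    {x y : List (Symbol U g.NT)} (h1 : g.Derives [Symbol.nonterminal B] x)
    (h2 : g.Derives [Symbol.nonterminal C] y) :
    g.Derives [Symbol.nonterminal r.input] (x ++ y) := by
  have hstep : g.Produces [Symbol.nonterminal r.input] [Symbol.nonterminal B, Symbol.nonterminal C] := by
    refine ⟨r, hr, ?_⟩
    rw [← hout]
    exact ContextFreeRule.Rewrites.input_output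
  refine hstep.trans_derives ?_
  have hx : g.Derives ([Symbol.nonterminal B] ++ [Symbol.nonterminal C]) (x ++ [Symbol.nonterminal C]) :=
    h1.append_right _
  exact hx.trans (h2.append_left _)


def seg {T : Type} (d : List T) (i0 j0 : ℕ) : List T := (d.drop i0).take (j0 + 1 - i0)

lemma seg_length {T : Type} {d : List T} {i0 j0 : ℕ} (h1 : i0 ≤ j0) (h2 : j0 < d.length) :
    (seg d i0 j0).length = j0 + 1 - i0 := by
  simp [seg]; omega

lemma seg_ne_nil {T : Type} {d : List T} {i0 j0 : ℕ} (h1 : i0 ≤ j0) (h2 : j0 < d.length) :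
    seg d i0 j0 ≠ [] := by
  intro h
  have := seg_length h1 h2
  rw [h] at this
  simp at this
  omega

lemma seg_append {T : Type} {d : List T} {i0 i' j0 : ℕ} (h1 : i0 ≤ i') (h2 : i' < j0) :
    seg d i0 i' ++ seg d (i' + 1) j0 = seg d i0 j0 := by
  have hd : (d.drop i0).drop (i' + 1 - i0) = d.drop (i' + 1) := by
    rw [List.drop_drop]; congr 1; omega
  have : seg d i0 j0 = (d.drop i0).take ((i' + 1 - i0) + (j0 + 1 - (i' + 1))) := by
    unfold seg; congr 1; omega
  rw [this, List.take_add, hd]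
  rfl

lemma seg_split {T : Type} {d : List T} {i0 j0 : ℕ} {s t : List T}
    (h1 : i0 ≤ j0) (h2 : j0 < d.length) (hst : s ++ t = seg d i0 j0)
    (hs : s ≠ []) (ht : t ≠ []) :
    ∃ i', i0 ≤ i' ∧ i' < j0 ∧ s = seg d i0 i' ∧ t = seg d (i' + 1) j0 := by
  have hlen : s.length + t.length = j0 + 1 - i0 := by
    have := seg_length h1 h2
    rw [← hst] at this
    simpa using this
  have hs1 : 1 ≤ s.length := List.length_pos_iff.mpr hs
  have ht1 : 1 ≤ t.length := List.length_pos_iff.mpr ht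
  refine ⟨i0 + s.length - 1, by omega, by omega, ?_⟩
  have happ : seg d i0 (i0 + s.length - 1) ++ seg d (i0 + s.length - 1 + 1) j0 = s ++ t := by
    rw [seg_append (by omega) (by omega), hst]
  have hl : (seg d i0 (i0 + s.length - 1)).length = s.length := by
    rw [seg_length (by omega) (by omega)]; omega
  obtain ⟨e1, e2⟩ := List.append_inj happ.symm (by omega)
  exact ⟨e1, e2⟩

lemma seg_full {T : Type} {d : List T} (hd : 1 ≤ d.length) : seg d 0 (d.length - 1) = d := by
  unfold seg
  rw [List.drop_zero]
  have : d.length - 1 + 1 - 0 = d.length := by omega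
  rw [this, List.take_length]

lemma seg_singleton {T : Type} {d : List T} {i0 : ℕ} (h : i0 < d.length) :
    seg d i0 i0 = [d.get ⟨i0, h⟩] := by
  unfold seg
  have : i0 + 1 - i0 = 1 := by omega
  rw [this, List.drop_eq_getElem_cons h, List.take_cons, List.take_zero]
  · simp
  · norm_num

lemma seg_eq_singleton_iff {T : Type} {d : List T} {i0 : ℕ} {σ : T} (h : i0 < d.length) :
    seg d i0 i0 = [σ] ↔ d[i0]? = some σ := by
  rw [seg_singleton h]
  simp [List.getElem?_eq_getElem h]

variable {T X : Type} {d : List T} {N : Type}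


lemma mem_adjust_rules {G : ContextFreeGrammar.{0} (T ⊕ VarOp X)}
    {r' : ContextFreeRule (T ⊕ VarOp X) (G.NT × Option (ℕ × ℕ))} :
    r' ∈ (adjust G d).rules ↔ ∃ r ∈ G.rules, r' ∈ adjustRule d G.NT r := by
  classical exact List.mem_toFinset.trans (List.mem_flatMap.trans (by simp))

-- test reduction of adjustRule with known output
open Classical in
example (inp : N) (σ : T) :
    adjustRule (X := X) d N ⟨inp, [Symbol.terminal (Sum.inl σ)]⟩ =
    (List.range d.length).filterMap (fun i0 =>
        if d[i0]? = some σ then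
          some ⟨(inp, some (i0 + 1, i0 + 1)), [Symbol.terminal (Sum.inl σ)]⟩
        else none) := rfl

lemma mem_adjustRule_inl {r : ContextFreeRule (T ⊕ VarOp X) N} {σ : T} {i0 : ℕ}
    (hout : r.output = [Symbol.terminal (Sum.inl σ)]) (hi : i0 < d.length)
    (hσ : d[i0]? = some σ) :
    (⟨(r.input, some (i0 + 1, i0 + 1)), [Symbol.terminal (Sum.inl σ)]⟩ :
      ContextFreeRule (T ⊕ VarOp X) (N × Option (ℕ × ℕ))) ∈ adjustRule d N r := by
  obtain ⟨inp, out⟩ := r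
  simp only at hout
  subst hout
  show _ ∈ (List.range d.length).filterMap _
  rw [List.mem_filterMap]
  exact ⟨i0, List.mem_range.mpr hi, by rw [if_pos hσ]⟩

lemma mem_adjustRule_inr {r : ContextFreeRule (T ⊕ VarOp X) N} {τ : VarOp X}
    (hout : r.output = [Symbol.terminal (Sum.inr τ)]) :
    (⟨(r.input, none), [Symbol.terminal (Sum.inr τ)]⟩ :
      ContextFreeRule (T ⊕ VarOp X) (N × Option (ℕ × ℕ))) ∈ adjustRule d N r := by
  obtain ⟨inp, out⟩ := r
  simp only at hout
  subst hout
  show _ ∈ [_]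
  simp

lemma mem_adjustRule_eps {r : ContextFreeRule (T ⊕ VarOp X) N} {B C : N}
    (hout : r.output = [Symbol.nonterminal B, Symbol.nonterminal C]) :
    (⟨(r.input, none), [Symbol.nonterminal (B, none), Symbol.nonterminal (C, none)]⟩ :
      ContextFreeRule (T ⊕ VarOp X) (N × Option (ℕ × ℕ))) ∈ adjustRule d N r := by
  obtain ⟨inp, out⟩ := r
  simp only at hout
  subst hout
  show _ ∈ _ :: _
  exact List.mem_cons_self

lemma mem_adjustRule_flat {r : ContextFreeRule (T ⊕ VarOp X) N} {B C : N} {i0 j0 : ℕ}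
    (hout : r.output = [Symbol.nonterminal B, Symbol.nonterminal C])
    (hij : i0 ≤ j0) (hj : j0 < d.length)
    {r' : ContextFreeRule (T ⊕ VarOp X) (N × Option (ℕ × ℕ))}
    (hr' : r' =
        ⟨(r.input, some (i0 + 1, j0 + 1)),
          [Symbol.nonterminal (B, some (i0 + 1, j0 + 1)), Symbol.nonterminal (C, none)]⟩ ∨
      r' = ⟨(r.input, some (i0 + 1, j0 + 1)),
          [Symbol.nonterminal (B, none), Symbol.nonterminal (C, some (i0 + 1, j0 + 1))]⟩ ∨
      ∃ i', i0 ≤ i' ∧ i' < j0 ∧ r' = ⟨(r.input, some (i0 + 1, j0 + 1)),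
          [Symbol.nonterminal (B, some (i0 + 1, i' + 1)),
           Symbol.nonterminal (C, some (i' + 2, j0 + 1))]⟩) :
    r' ∈ adjustRule d N r := by
  obtain ⟨inp, out⟩ := r
  simp only at hout hr'
  subst hout
  show _ ∈ _ :: (List.range d.length).flatMap _
  apply List.mem_cons_of_mem
  rw [List.mem_flatMap]
  refine ⟨i0, List.mem_range.mpr (lt_of_le_of_lt hij hj), ?_⟩
  rw [List.mem_flatMap]
  refine ⟨j0, List.mem_range.mpr hj, ?_⟩
  rw [if_pos hij]
  rcases hr' with rfl | rfl | ⟨i', h1, h2, rfl⟩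
  · exact List.mem_cons_self
  · exact List.mem_cons_of_mem _ List.mem_cons_self
  · apply List.mem_cons_of_mem _ (List.mem_cons_of_mem _ _)
    rw [List.mem_filterMap]
    exact ⟨i', List.mem_range.mpr (lt_trans h2 hj), by rw [if_pos ⟨h1, h2⟩]⟩

lemma adjustRule_cases {r : ContextFreeRule (T ⊕ VarOp X) N}
    {r' : ContextFreeRule (T ⊕ VarOp X) (N × Option (ℕ × ℕ))}
    (h : r' ∈ adjustRule d N r) :
    (∃ σ i0, i0 < d.length ∧ d[i0]? = some σ ∧ r.output = [Symbol.terminal (Sum.inl σ)] ∧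
      r' = ⟨(r.input, some (i0 + 1, i0 + 1)), [Symbol.terminal (Sum.inl σ)]⟩) ∨
    (∃ τ, r.output = [Symbol.terminal (Sum.inr τ)] ∧
      r' = ⟨(r.input, none), [Symbol.terminal (Sum.inr τ)]⟩) ∨
    (∃ B C, r.output = [Symbol.nonterminal B, Symbol.nonterminal C] ∧
      (r' = ⟨(r.input, none), [Symbol.nonterminal (B, none), Symbol.nonterminal (C, none)]⟩ ∨
       ∃ i0 j0, i0 ≤ j0 ∧ j0 < d.length ∧
        (r' = ⟨(r.input, some (i0 + 1, j0 + 1)),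
            [Symbol.nonterminal (B, some (i0 + 1, j0 + 1)), Symbol.nonterminal (C, none)]⟩ ∨
         r' = ⟨(r.input, some (i0 + 1, j0 + 1)),
            [Symbol.nonterminal (B, none), Symbol.nonterminal (C, some (i0 + 1, j0 + 1))]⟩ ∨
         ∃ i', i0 ≤ i' ∧ i' < j0 ∧ r' = ⟨(r.input, some (i0 + 1, j0 + 1)),
            [Symbol.nonterminal (B, some (i0 + 1, i' + 1)),
             Symbol.nonterminal (C, some (i' + 2, j0 + 1))]⟩))) := by
  obtain ⟨inp, out⟩ := r
  rcases out with _ | ⟨s1, _ | ⟨s2, _ | ⟨s3, out⟩⟩⟩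
  · exact absurd h (by simp [adjustRule])
  · -- length 1
    rcases s1 with a | B
    · rcases a with σ | τ
      · -- inl
        replace h : r' ∈ (List.range d.length).filterMap _ := h
        rw [List.mem_filterMap] at h
        obtain ⟨i0, hi0, hif⟩ := h
        rw [List.mem_range] at hi0
        split at hif
        · left
          exact ⟨σ, i0, hi0, ‹_›, rfl, (Option.some_inj.mp hif).symm⟩
        · exact absurd hif (by simp)
      · -- inr
        replace h : r' ∈ [_] := h
        rw [List.mem_singleton] at h
        exact Or.inr (Or.inl ⟨τ, rfl, h⟩)
    · exact absurd h (by simp [adjustRule])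
  · -- length 2
    rcases s1 with a | B
    · exact absurd h (by rcases a with σ | τ <;> rcases s2 with (σ' | τ') | B' <;> simp [adjustRule])
    · rcases s2 with a | C
      · exact absurd h (by rcases a with σ | τ <;> simp [adjustRule])
      · -- nonterminal pair
        refine Or.inr (Or.inr ⟨B, C, rfl, ?_⟩)
        replace h : r' ∈ _ :: (List.range d.length).flatMap _ := h
        rcases List.mem_cons.mp h with rfl | h
        · exact Or.inl rfl
        · right
          rw [List.mem_flatMap] at h
          obtain ⟨i0, hi0, h⟩ := h
          rw [List.mem_flatMap] at h
          obtain ⟨j0, hj0, h⟩ := h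
          rw [List.mem_range] at hi0 hj0
          split at h
          · refine ⟨i0, j0, ‹_›, hj0, ?_⟩
            rcases List.mem_cons.mp h with rfl | h
            · exact Or.inl rfl
            rcases List.mem_cons.mp h with rfl | h
            · exact Or.inr (Or.inl rfl)
            rw [List.mem_filterMap] at h
            obtain ⟨i', hi', hif⟩ := h
            split at hif
            · exact Or.inr (Or.inr ⟨i', ‹i0 ≤ i' ∧ i' < j0›.1, ‹i0 ≤ i' ∧ i' < j0›.2,
                (Option.some_inj.mp hif).symm⟩)
            · exact absurd hif (by simp)
          · exact absurd h (by simp)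
  · -- length ≥ 3
    exact absurd h (by
      rcases s1 with (σ | τ) | B <;> rcases s2 with (σ' | τ') | B' <;>
        rcases s3 with (σ'' | τ'') | B'' <;> simp [adjustRule])

section MainLemmas

variable {T X : Type}

def Fits (d : List T) (o : Option (ℕ × ℕ)) (w : List T) : Prop :=
  match o with
  | none => w = []
  | some p => ∃ i0 j0, p = (i0 + 1, j0 + 1) ∧ i0 ≤ j0 ∧ j0 < d.length ∧ w = seg d i0 j0

lemma fits_none {d w : List T} : Fits d none w ↔ w = [] := Iff.rfl

lemma fits_some_mk {d : List T} {i0 j0 : ℕ} {w : List T} (h1 : i0 ≤ j0) (h2 : j0 < d.length)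
    (h3 : w = seg d i0 j0) : Fits d (some (i0 + 1, j0 + 1)) w :=
  ⟨i0, j0, rfl, h1, h2, h3⟩

lemma fits_some_elim {d : List T} {i0 j0 : ℕ} {w : List T}
    (h : Fits d (some (i0 + 1, j0 + 1)) w) :
    i0 ≤ j0 ∧ j0 < d.length ∧ w = seg d i0 j0 := by
  obtain ⟨i0', j0', heq, h1, h2, h3⟩ := h
  obtain ⟨e1, e2⟩ : i0' = i0 ∧ j0' = j0 := by
    simp [Prod.ext_iff] at heq; omega
  subst e1; subst e2
  exact ⟨h1, h2, h3⟩

lemma clr_append (u v : RefWord T X) : clr (u ++ v) = clr u ++ clr v :=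
  List.filterMap_append ..

@[simp] lemma clr_inl (σ : T) : clr ([Sum.inl σ] : RefWord T X) = [σ] := rfl

@[simp] lemma clr_inr (τ : VarOp X) : clr ([Sum.inr τ] : RefWord T X) = ([] : List T) := rfl

lemma adjust_inCNF (G : ContextFreeGrammar.{0} (T ⊕ VarOp X)) (d : List T) :
    InCNF (adjust G d) := by
  intro r' hr'
  replace hr' := mem_adjust_rules.mp hr'
  obtain ⟨r, hr, hmem⟩ := hr'
  rcases adjustRule_cases hmem with ⟨σ, i0, _, _, _, rfl⟩ | ⟨τ, _, rfl⟩ | ⟨B, C, _, hc⟩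
  · right; exact ⟨_, rfl⟩
  · right; exact ⟨_, rfl⟩
  · left; rcases hc with rfl | ⟨i0, j0, _, _, rfl | rfl | ⟨i', _, _, rfl⟩⟩ <;> exact ⟨_, _, rfl⟩

lemma forward_main {G : ContextFreeGrammar.{0} (T ⊕ VarOp X)} (hCNF : InCNF G) (d : List T) :
    ∀ (n : ℕ) (w : RefWord T X), w.length = n → ∀ (A : G.NT) (o : Option (ℕ × ℕ)),
    G.Derives [Symbol.nonterminal A] (w.map Symbol.terminal) → Fits d o (clr w) →
    (adjust G d).Derives [Symbol.nonterminal (A, o)] (w.map Symbol.terminal) := by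
  intro n
  induction n using Nat.strong_induction_on with
  | _ n ih =>
  intro w hlen A o hder hfit
  obtain ⟨r, hrG, hin, hcase⟩ := cnf_decomp hCNF hder
  subst hin
  rcases hcase with ⟨a, hout, rfl⟩ | ⟨B, C, w1, w2, hout, rfl, hw1, hw2, h1, h2⟩
  · -- terminal case
    rcases a with σ | τ
    · rw [clr_inl] at hfit
      rcases o with _ | p
      · exact absurd (fits_none.mp hfit) (by simp)
      · obtain ⟨i0, j0, rfl, hij, hj, hseg⟩ := hfit
        have hii : i0 = j0 := by
          have := seg_length hij hj
          rw [← hseg] at this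
          simp at this
          omega
        subst hii
        have hget : d[i0]? = some σ := (seg_eq_singleton_iff hj).mp hseg.symm
        have hmem : (⟨(r.input, some (i0 + 1, i0 + 1)), [Symbol.terminal (Sum.inl σ)]⟩ :
            ContextFreeRule (T ⊕ VarOp X) (G.NT × Option (ℕ × ℕ))) ∈ (adjust G d).rules :=
          mem_adjust_rules.mpr ⟨r, hrG, mem_adjustRule_inl hout hj hget⟩
        exact (ContextFreeGrammar.Produces.single
          ⟨_, hmem, ContextFreeRule.Rewrites.input_output⟩)
    · rw [clr_inr] at hfit
      rcases o with _ | p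
      · have hmem : (⟨(r.input, none), [Symbol.terminal (Sum.inr τ)]⟩ :
            ContextFreeRule (T ⊕ VarOp X) (G.NT × Option (ℕ × ℕ))) ∈ (adjust G d).rules :=
          mem_adjust_rules.mpr ⟨r, hrG, mem_adjustRule_inr hout⟩
        exact (ContextFreeGrammar.Produces.single
          ⟨_, hmem, ContextFreeRule.Rewrites.input_output⟩)
      · obtain ⟨i0, j0, rfl, hij, hj, hseg⟩ := hfit
        exact absurd hseg.symm (seg_ne_nil hij hj)
  · -- binary case
    rw [clr_append] at hfit
    have hl1 : w1.length < n := by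
      subst hlen; simp only [List.length_append]
      have := List.length_pos_iff.mpr hw2; omega
    have hl2 : w2.length < n := by
      subst hlen; simp only [List.length_append]
      have := List.length_pos_iff.mpr hw1; omega
    rw [List.map_append]
    rcases o with _ | p
    · rcases List.append_eq_nil_iff.mp (fits_none.mp hfit) with ⟨hc1, hc2⟩
      have ihB := ih _ hl1 w1 rfl B none h1 (fits_none.mpr hc1)
      have ihC := ih _ hl2 w2 rfl C none h2 (fits_none.mpr hc2)
      exact derives_binary
        (mem_adjust_rules.mpr ⟨r, hrG, mem_adjustRule_eps hout⟩)
        (r := ⟨(r.input, none), _⟩) rfl ihB ihC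
    · obtain ⟨i0, j0, rfl, hij, hj, hseg⟩ := hfit
      by_cases hc1 : clr w1 = []
      · have hc2 : clr w2 = seg d i0 j0 := by
          rw [hc1] at hseg; simpa using hseg
        have ihB := ih _ hl1 w1 rfl B none h1 (fits_none.mpr hc1)
        have ihC := ih _ hl2 w2 rfl C (some (i0 + 1, j0 + 1)) h2 (fits_some_mk hij hj hc2)
        exact derives_binary
          (mem_adjust_rules.mpr ⟨r, hrG, mem_adjustRule_flat hout hij hj (Or.inr (Or.inl rfl))⟩)
          (r := ⟨(r.input, some (i0 + 1, j0 + 1)), _⟩) rfl ihB ihC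
      · by_cases hc2 : clr w2 = []
        · have hc1' : clr w1 = seg d i0 j0 := by
            rw [hc2] at hseg; simpa using hseg
          have ihB := ih _ hl1 w1 rfl B (some (i0 + 1, j0 + 1)) h1 (fits_some_mk hij hj hc1')
          have ihC := ih _ hl2 w2 rfl C none h2 (fits_none.mpr hc2)
          exact derives_binary
            (mem_adjust_rules.mpr ⟨r, hrG, mem_adjustRule_flat hout hij hj (Or.inl rfl)⟩)
            (r := ⟨(r.input, some (i0 + 1, j0 + 1)), _⟩) rfl ihB ihC
        · obtain ⟨i', hi1, hi2, hs1, hs2⟩ := seg_split hij hj hseg hc1 hc2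
          have ihB := ih _ hl1 w1 rfl B (some (i0 + 1, i' + 1)) h1
            (fits_some_mk hi1 (lt_trans hi2 hj) hs1)
          have ihC := ih _ hl2 w2 rfl C (some (i' + 1 + 1, j0 + 1)) h2
            (fits_some_mk (by omega) hj hs2)
          exact derives_binary
            (mem_adjust_rules.mpr ⟨r, hrG,
              mem_adjustRule_flat hout hij hj (Or.inr (Or.inr ⟨i', hi1, hi2, rfl⟩))⟩)
            (r := ⟨(r.input, some (i0 + 1, j0 + 1)), _⟩) rfl ihB ihC

lemma backward_main {G : ContextFreeGrammar.{0} (T ⊕ VarOp X)} (d : List T) :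
    ∀ (n : ℕ) (w : RefWord T X), w.length = n → ∀ (A : G.NT) (o : Option (ℕ × ℕ)),
    (adjust G d).Derives [Symbol.nonterminal (A, o)] (w.map Symbol.terminal) →
    G.Derives [Symbol.nonterminal A] (w.map Symbol.terminal) ∧ Fits d o (clr w) := by
  intro n
  induction n using Nat.strong_induction_on with
  | _ n ih =>
  intro w hlen A o hder
  obtain ⟨r', hr'G, hin, hcase⟩ := cnf_decomp (adjust_inCNF G d) hder
  obtain ⟨r, hrG, hmem⟩ := mem_adjust_rules.mp hr'G
  rcases hcase with ⟨a, hout', rfl⟩ | ⟨B', C', w1, w2, hout', rfl, hw1, hw2, h1, h2⟩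
  · -- terminal case
    rcases adjustRule_cases hmem with ⟨σ, i0, hi0, hget, houtG, rfl⟩ | ⟨τ, houtG, rfl⟩ |
      ⟨B, C, houtG, hc⟩
    · simp only [Prod.mk.injEq] at hin
      obtain ⟨rfl, rfl⟩ := hin
      have ha : a = Sum.inl σ := Symbol.terminal.inj (List.cons.inj hout'.symm).1
      subst ha
      refine ⟨?_, ?_⟩
      · refine ContextFreeGrammar.Produces.single ⟨r, hrG, ?_⟩
        have he : (List.map Symbol.terminal [(Sum.inl σ : T ⊕ VarOp X)]) = r.output := by
          rw [houtG]; rfl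
        rw [he]
        exact ContextFreeRule.Rewrites.input_output
      · rw [clr_inl]
        exact fits_some_mk le_rfl hi0 ((seg_eq_singleton_iff hi0).mpr hget).symm
    · simp only [Prod.mk.injEq] at hin
      obtain ⟨rfl, rfl⟩ := hin
      have ha : a = Sum.inr τ := Symbol.terminal.inj (List.cons.inj hout'.symm).1
      subst ha
      refine ⟨?_, fits_none.mpr (clr_inr τ)⟩
      refine ContextFreeGrammar.Produces.single ⟨r, hrG, ?_⟩
      have he : (List.map Symbol.terminal [(Sum.inr τ : T ⊕ VarOp X)]) = r.output := by
        rw [houtG]; rfl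
      rw [he]
      exact ContextFreeRule.Rewrites.input_output
    · exfalso
      rcases hc with rfl | ⟨i0, j0, _, _, rfl | rfl | ⟨i', _, _, rfl⟩⟩ <;> cases (List.cons.inj hout').1
  · -- binary case
    have hl1 : w1.length < n := by
      subst hlen; simp only [List.length_append]
      have := List.length_pos_iff.mpr hw2; omega
    have hl2 : w2.length < n := by
      subst hlen; simp only [List.length_append]
      have := List.length_pos_iff.mpr hw1; omega
    rw [clr_append]
    rcases adjustRule_cases hmem with ⟨σ, i0, hi0, hget, houtG, rfl⟩ | ⟨τ, houtG, rfl⟩ |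
      ⟨B, C, houtG, hc⟩
    · exfalso; cases (List.cons.inj hout').1
    · exfalso; cases (List.cons.inj hout').1
    · rcases hc with rfl | ⟨i0, j0, hij, hj, rfl | rfl | ⟨i', hi1, hi2, rfl⟩⟩
      all_goals (
        simp only [Prod.mk.injEq] at hin
        obtain ⟨rfl, rfl⟩ := hin
        simp only [List.cons.injEq, Symbol.nonterminal.injEq, and_true] at hout'
        obtain ⟨rfl, rfl⟩ := hout')
      · obtain ⟨g1, f1⟩ := ih _ hl1 w1 rfl B none h1
        obtain ⟨g2, f2⟩ := ih _ hl2 w2 rfl C none h2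
        refine ⟨?_, ?_⟩
        · rw [List.map_append]; exact derives_binary hrG houtG g1 g2
        · rw [fits_none.mp f1, fits_none.mp f2]; rfl
      · obtain ⟨g1, f1⟩ := ih _ hl1 w1 rfl B (some (i0 + 1, j0 + 1)) h1
        obtain ⟨g2, f2⟩ := ih _ hl2 w2 rfl C none h2
        obtain ⟨-, -, hseg1⟩ := fits_some_elim f1
        refine ⟨by rw [List.map_append]; exact derives_binary hrG houtG g1 g2, ?_⟩
        rw [fits_none.mp f2, List.append_nil]
        exact fits_some_mk hij hj hseg1
      · obtain ⟨g1, f1⟩ := ih _ hl1 w1 rfl B none h1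
        obtain ⟨g2, f2⟩ := ih _ hl2 w2 rfl C (some (i0 + 1, j0 + 1)) h2
        obtain ⟨-, -, hseg2⟩ := fits_some_elim f2
        refine ⟨by rw [List.map_append]; exact derives_binary hrG houtG g1 g2, ?_⟩
        rw [fits_none.mp f1, List.nil_append]
        exact fits_some_mk hij hj hseg2
      · obtain ⟨g1, f1⟩ := ih _ hl1 w1 rfl B (some (i0 + 1, i' + 1)) h1
        obtain ⟨g2, f2⟩ := ih _ hl2 w2 rfl C (some (i' + 1 + 1, j0 + 1)) h2
        obtain ⟨-, -, hseg1⟩ := fits_some_elim f1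
        obtain ⟨-, -, hseg2⟩ := fits_some_elim f2
        refine ⟨by rw [List.map_append]; exact derives_binary hrG houtG g1 g2, ?_⟩
        rw [hseg1, hseg2, seg_append hi1 hi2]
        exact fits_some_mk hij hj rfl

end MainLemmas


/-- Additionally, `A ⇒*_G r` for ref-words of only variable operations iff
`A_ε ⇒*_{G_d} r`; consequently the set of valid ref-words of `G` mapping to `d` equals the
language generated by `G_d` (from `S_{1,n}`) intersected with the valid ref-words. -/
theorem stmt15 (T X : Type) (G : ContextFreeGrammar.{0} (T ⊕ VarOp X)) (hCNF : InCNF G)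
    (d : List T) (hd : 1 ≤ d.length) :
    (∀ (A : G.NT) (r : RefWord T X), clr r = [] →
      (G.Derives [Symbol.nonterminal A] (r.map Symbol.terminal) ↔
        (adjust G d).Derives [Symbol.nonterminal (A, (none : Option (ℕ × ℕ)))]
          (r.map Symbol.terminal))) ∧
    {r : RefWord T X | r ∈ G.language ∧ ValidRef r ∧ clr r = d} =
      {r : RefWord T X | r ∈ (adjust G d).language ∧ ValidRef r} := by
  constructor
  · intro A r hclr
    constructor
    · intro h
      exact forward_main hCNF d r.length r rfl A none h (fits_none.mpr hclr)
    · intro h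
      exact (backward_main d r.length r rfl A none h).1
  · have hpair : (1, d.length) = (0 + 1, (d.length - 1) + 1) := by
      rw [Prod.mk.injEq]; omega
    ext r
    simp only [Set.mem_setOf_eq]
    constructor
    · rintro ⟨hlang, hval, hclr⟩
      refine ⟨?_, hval⟩
      rw [ContextFreeGrammar.mem_language_iff] at hlang ⊢
      have hfit : Fits d (some (1, d.length)) (clr r) := by
        rw [hpair]
        exact fits_some_mk (by omega) (by omega) (by rw [hclr, seg_full hd])
      exact forward_main hCNF d r.length r rfl G.initial (some (1, d.length)) hlang hfit
    · rintro ⟨hlang, hval⟩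
      rw [ContextFreeGrammar.mem_language_iff] at hlang
      obtain ⟨hG, hfit⟩ := backward_main d r.length r rfl G.initial (some (1, d.length)) hlang
      refine ⟨(ContextFreeGrammar.mem_language_iff ..).mpr hG, hval, ?_⟩
      rw [hpair] at hfit
      obtain ⟨-, -, hseg⟩ := fits_some_elim hfit
      rw [hseg, seg_full hd]
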